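/- Let A be a finite abelian group, M a countable set, and β a probability measure on A such that for every proper subgroup G ⊆ A, the support of β is not contained in a single coset of G. Then the product measure β^{⊗M} on A^M is harmonically mixing. -/

import Mathlib

open MeasureTheory

/-- Evaluation at `a` of the character of `A^M` with coefficient system `χ`
(a family of characters of `A`, all but finitely many trivial). -/
noncomputable def charEval {A M : Type*} [AddCommGroup A] (χ : M → AddChar A ℂ)
    (a : M → A) : ℂ :=
  ∏ᶠ m, χ m (a m)

set_option linter.unusedSectionVars false
set_option linter.unusedVariables false
set_option maxHeartbeats 1000000

namespace BHMG
variable {A : Type*} [AddCommGroup A] [Fintype A] [MeasurableSpace A]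

/-- the measurable atom of a point -/
def matom (x : A) : Set A := ⋂₀ {s : Set A | MeasurableSet s ∧ x ∈ s}

lemma measurableSet_matom (x : A) : MeasurableSet (matom x) := by
  refine MeasurableSet.sInter ?_ (fun s hs => hs.1)
  exact Set.to_countable _

lemma mem_matom_self (x : A) : x ∈ matom x := fun s hs => hs.2

lemma mem_matom_iff {x y : A} : y ∈ matom x ↔ ∀ s : Set A, MeasurableSet s → x ∈ s → y ∈ s := by
  constructor
  · intro h s hs hx; exact h s ⟨hs, hx⟩
  · intro h s hs; exact h s hs.1 hs.2

lemma matom_subset {x : A} {s : Set A} (hs : MeasurableSet s) (hx : x ∈ s) : matom x ⊆ s :=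
  Set.sInter_subset_of_mem ⟨hs, hx⟩

lemma matom_symm {x y : A} (h : y ∈ matom x) : x ∈ matom y := by
  rw [mem_matom_iff]
  intro s hs hy
  by_contra hx
  exact (mem_matom_iff.1 h) sᶜ hs.compl hx hy

lemma matom_eq {x y : A} (h : y ∈ matom x) : matom y = matom x := by
  ext z
  simp only [mem_matom_iff]
  constructor
  · intro hz s hs hx; exact hz s hs (mem_matom_iff.1 h s hs hx)
  · intro hz s hs hy; exact hz s hs (mem_matom_iff.1 (matom_symm h) s hs hy)


lemma measure_singleton_eq_matom (β : Measure A) (x : A) : β {x} = β (matom x) := by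
  refine le_antisymm (measure_mono (by simpa using mem_matom_self x)) ?_
  rw [measure_eq_iInf ({x} : Set A)]
  refine le_iInf fun t => le_iInf fun hst => le_iInf fun ht => ?_
  exact measure_mono (matom_subset ht (hst rfl))

/-- pick an element of a set -/
noncomputable def pick (s : Set A) : A :=
  if h : (s.toFinite.toFinset.image (Fintype.equivFin A)).Nonempty then
    (Fintype.equivFin A).symm (Finset.min' _ h) else 0

/-- canonical representative of an atom -/
noncomputable def rep (x : A) : A := pick (matom x)

lemma rep_mem (x : A) : rep x ∈ matom x := by
  have hne : ((matom x).toFinite.toFinset.image (Fintype.equivFin A)).Nonempty :=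
    ⟨Fintype.equivFin A x, Finset.mem_image_of_mem _ ((matom x).toFinite.mem_toFinset.2 (mem_matom_self x))⟩
  rw [rep, pick, dif_pos hne]
  have := Finset.min'_mem _ hne
  rw [Finset.mem_image] at this
  obtain ⟨y, hy, hey⟩ := this
  rw [← hey, Equiv.symm_apply_apply]
  exact (matom x).toFinite.mem_toFinset.1 hy

lemma rep_eq_of_mem {x y : A} (h : y ∈ matom x) : rep y = rep x :=
  congrArg pick (matom_eq h)

lemma rep_rep (x : A) : rep (rep x) = rep x := rep_eq_of_mem (rep_mem x)

lemma mem_matom_rep (x : A) : x ∈ matom (rep x) := by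
  rw [matom_eq (rep_mem x)]; exact mem_matom_self x

/-- set of canonical representatives -/
noncomputable def Reps (A : Type*) [AddCommGroup A] [Fintype A] [MeasurableSpace A] :
    Finset A := @Finset.image _ _ (Classical.decEq A) rep Finset.univ

lemma rep_mem_Reps (x : A) : rep x ∈ Reps A := by
  classical
  exact Finset.mem_image_of_mem _ (Finset.mem_univ x)

lemma rep_of_mem_Reps {r : A} (h : r ∈ Reps A) : rep r = r := by
  classical
  obtain ⟨x, -, rfl⟩ := Finset.mem_image.1 h
  exact rep_rep x

lemma matom_disjoint {r r' : A} (hr : rep r = r) (hr' : rep r' = r') (hne : r ≠ r') :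
    Disjoint (matom r) (matom r') := by
  rw [Set.disjoint_left]
  intro z hz hz'
  exact hne (by rw [← hr, ← hr', ← rep_eq_of_mem hz, rep_eq_of_mem hz'])

lemma biUnion_matom : ⋃ r ∈ Reps A, matom r = Set.univ := by
  ext x
  simp only [Set.mem_iUnion, Set.mem_univ, iff_true]
  exact ⟨rep x, rep_mem_Reps x, mem_matom_rep x⟩

lemma sum_measure_matom (β : Measure A) [IsProbabilityMeasure β] :
    ∑ r ∈ Reps A, β (matom r) = 1 := by
  rw [← measure_biUnion_finset ?_ (fun r _ => measurableSet_matom r), biUnion_matom,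
    measure_univ]
  intro r hr r' hr' hne
  exact (matom_disjoint (rep_of_mem_Reps hr) (rep_of_mem_Reps hr') hne).mono le_rfl le_rfl



lemma char_pow_card (ψ : AddChar A ℂ) (a : A) : ψ a ^ Fintype.card A = 1 := by
  rw [← AddChar.map_nsmul_eq_pow, card_nsmul_eq_zero, AddChar.map_zero_eq_one]

lemma norm_char (ψ : AddChar A ℂ) (a : A) : ‖ψ a‖ = 1 := by
  have hc : (0:ℕ) < Fintype.card A := Fintype.card_pos
  have h0 : 0 ≤ ‖ψ a‖ := norm_nonneg _
  have h' : ‖ψ a‖ ^ Fintype.card A = 1 := by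
    rw [← norm_pow, char_pow_card, norm_one]
  rcases lt_trichotomy ‖ψ a‖ 1 with h1 | h1 | h1
  · exact absurd h' (ne_of_lt (pow_lt_one₀ h0 h1 hc.ne'))
  · exact h1
  · exact absurd h' (ne_of_gt (one_lt_pow₀ h1 hc.ne'))

lemma char_ne_zero (ψ : AddChar A ℂ) (a : A) : ψ a ≠ 0 := by
  intro h
  have := norm_char ψ a
  rw [h, norm_zero] at this
  norm_num at this

instance : Finite (AddChar A ℂ) := by
  have hfin : ({z : ℂ | z ^ Fintype.card A = 1}).Finite := by
    have : {z : ℂ | z ^ Fintype.card A = 1} ⊆ ((Polynomial.nthRoots (Fintype.card A) (1:ℂ)).toFinset : Set ℂ) := by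
      intro z hz
      simp only [Set.mem_setOf_eq] at hz
      simp only [Finset.coe_sort_coe, Multiset.mem_toFinset, Finset.mem_coe]
      rw [Polynomial.mem_nthRoots Fintype.card_pos]
      exact hz
    exact Set.Finite.subset (Set.finite_coe_iff.1 (by infer_instance)) this
  haveI := hfin.to_subtype
  refine Finite.of_injective
    (fun ψ : AddChar A ℂ => fun a => (⟨ψ a, char_pow_card ψ a⟩ : {z : ℂ | z ^ Fintype.card A = 1})) ?_
  intro ψ φ h
  ext a
  exact congrArg Subtype.val (congrFun h a)


end BHMG

namespace BHMG
variable {A : Type*} [AddCommGroup A] [Fintype A] [MeasurableSpace A]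

/-- the single-site factor of the integral -/
noncomputable def Phi (β : MeasureTheory.Measure A) (ψ : AddChar A ℂ) : ℂ :=
  ∑ r ∈ Reps A, ψ r * ((β (matom r)).toReal : ℂ)

lemma sum_w_one (β : MeasureTheory.Measure A) [MeasureTheory.IsProbabilityMeasure β] :
    ∑ r ∈ Reps A, (β (matom r)).toReal = 1 := by
  rw [← ENNReal.toReal_sum (fun r _ => MeasureTheory.measure_ne_top β _), sum_measure_matom β,
    ENNReal.toReal_one]

lemma norm_Phi_le_one (β : MeasureTheory.Measure A) [MeasureTheory.IsProbabilityMeasure β]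
    (ψ : AddChar A ℂ) : ‖Phi β ψ‖ ≤ 1 := by
  calc ‖Phi β ψ‖ ≤ ∑ r ∈ Reps A, ‖ψ r * ((β (matom r)).toReal : ℂ)‖ := norm_sum_le _ _
    _ = ∑ r ∈ Reps A, (β (matom r)).toReal := by
        refine Finset.sum_congr rfl fun r _ => ?_
        rw [norm_mul, norm_char, one_mul, Complex.norm_real,
          Real.norm_of_nonneg ENNReal.toReal_nonneg]
    _ = 1 := sum_w_one β

lemma norm_Phi_lt_one (β : MeasureTheory.Measure A) [MeasureTheory.IsProbabilityMeasure β]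
    (hβ : ∀ G : AddSubgroup A, G ≠ ⊤ → ∀ x : A, β {a | a - x ∈ G} < 1)
    (ψ : AddChar A ℂ) (hψ : ψ ≠ 1) : ‖Phi β ψ‖ < 1 := by
  classical
  set w : A → ℝ := fun r => (β (matom r)).toReal with hw
  have hw0 : ∀ r, 0 ≤ w r := fun r => ENNReal.toReal_nonneg
  set P : Finset A := (Reps A).filter (fun r => β (matom r) ≠ 0) with hP
  have hPsub : P ⊆ Reps A := Finset.filter_subset _ _
  have hz : ∀ r ∈ Reps A, r ∉ P → β (matom r) = 0 := by
    intro r hr hnp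
    by_contra h0
    exact hnp (Finset.mem_filter.2 ⟨hr, h0⟩)
  have hwz : ∀ r ∈ Reps A, r ∉ P → w r = 0 := by
    intro r hr hnp
    simp [hw, hz r hr hnp]
  have hsumP : ∑ r ∈ P, w r = 1 := by
    rw [Finset.sum_subset hPsub (fun r hr hnp => hwz r hr hnp)]
    exact sum_w_one β
  have hPhiP : Phi β ψ = ∑ r ∈ P, ψ r * (w r : ℂ) := by
    rw [Phi, ← Finset.sum_subset hPsub
      (fun r hr hnp => by
        rw [show (β (matom r)).toReal = 0 from hwz r hr hnp, Complex.ofReal_zero, mul_zero])]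
  by_cases hconst : ∀ r₀ ∈ P, ∀ r₁ ∈ P, ψ r₀ = ψ r₁
  · -- impossible: contradicts hβ
    exfalso
    have hPne : P.Nonempty := by
      by_contra hne
      rw [Finset.not_nonempty_iff_eq_empty] at hne
      rw [hne, Finset.sum_empty] at hsumP
      norm_num at hsumP
    obtain ⟨r₀, hr₀⟩ := hPne
    set G : AddSubgroup A :=
      { carrier := {a | ψ a = 1}
        zero_mem' := AddChar.map_zero_eq_one ψ
        add_mem' := by
          intro a b ha hb
          simp only [Set.mem_setOf_eq, AddChar.map_add_eq_mul] at *
          rw [ha, hb, one_mul]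
        neg_mem' := by
          intro a ha
          simp only [Set.mem_setOf_eq, AddChar.map_neg_eq_inv] at *
          rw [ha, inv_one] } with hG
    have hGtop : G ≠ ⊤ := by
      obtain ⟨a, ha⟩ := AddChar.ne_one_iff.1 hψ
      intro htop
      exact ha (by have : a ∈ G := htop ▸ AddSubgroup.mem_top a; exact this)
    refine absurd (hβ G hGtop r₀) (not_lt.2 ?_)
    rw [measure_eq_iInf ({a | a - r₀ ∈ G} : Set A)]
    refine le_iInf fun t => le_iInf fun hst => le_iInf fun ht => ?_
    have hsub : ⋃ r ∈ P, matom r ⊆ t := by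
      refine Set.iUnion₂_subset fun r hr => matom_subset ht (hst ?_)
      have : ψ (r - r₀) = 1 := by
        rw [sub_eq_add_neg, AddChar.map_add_eq_mul, AddChar.map_neg_eq_inv,
          hconst r hr r₀ hr₀, mul_inv_cancel₀ (char_ne_zero ψ r₀)]
      exact this
    calc (1:ENNReal) = ∑ r ∈ P, β (matom r) := by
          rw [Finset.sum_subset hPsub (fun r hr hnp => hz r hr hnp), sum_measure_matom β]
      _ = β (⋃ r ∈ P, matom r) := by
          refine (MeasureTheory.measure_biUnion_finset ?_
            (fun r _ => measurableSet_matom r)).symm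
          intro r hr r' hr' hne
          exact (matom_disjoint (rep_of_mem_Reps (hPsub hr))
            (rep_of_mem_Reps (hPsub hr')) hne).mono le_rfl le_rfl
      _ ≤ β t := MeasureTheory.measure_mono hsub
  · push_neg at hconst
    obtain ⟨r₀, hr₀, r₁, hr₁, hne⟩ := hconst
    have hrne : r₀ ≠ r₁ := fun h => hne (by rw [h])
    have hwnz : ∀ r ∈ P, w r ≠ 0 := by
      intro r hr h0
      refine (Finset.mem_filter.1 hr).2 ?_
      rw [hw] at h0
      simpa [ENNReal.toReal_eq_zero_iff, MeasureTheory.measure_ne_top β _] using h0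
    have hw₀ : 0 < w r₀ := lt_of_le_of_ne (hw0 r₀) (Ne.symm (hwnz r₀ hr₀))
    have hw₁ : 0 < w r₁ := lt_of_le_of_ne (hw0 r₁) (Ne.symm (hwnz r₁ hr₁))
    have hr₁' : r₁ ∈ P.erase r₀ := Finset.mem_erase.2 ⟨hrne.symm, hr₁⟩
    set X := ψ r₀ * ((w r₀ : ℝ) : ℂ) with hX
    set Y := ψ r₁ * ((w r₁ : ℝ) : ℂ) with hY
    have hnorm₀ : ‖X‖ = w r₀ := by
      rw [hX, norm_mul, norm_char, one_mul, Complex.norm_real, Real.norm_of_nonneg (hw0 r₀)]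
    have hnorm₁ : ‖Y‖ = w r₁ := by
      rw [hY, norm_mul, norm_char, one_mul, Complex.norm_real, Real.norm_of_nonneg (hw0 r₁)]
    have hsplit : ∑ r ∈ P, ψ r * (w r : ℂ) =
        (X + Y) + ∑ r ∈ (P.erase r₀).erase r₁, ψ r * (w r : ℂ) := by
      rw [← Finset.add_sum_erase _ _ hr₀, ← Finset.add_sum_erase _ _ hr₁', add_assoc]
    have hwsplit : (w r₀ + w r₁) + ∑ r ∈ (P.erase r₀).erase r₁, w r = 1 := by
      rw [← hsumP, ← Finset.add_sum_erase _ _ hr₀, ← Finset.add_sum_erase _ _ hr₁', add_assoc]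
    have hX0 : X ≠ 0 := by
      rw [hX]
      exact mul_ne_zero (char_ne_zero ψ r₀) (by simpa using hw₀.ne')
    have hY0 : Y ≠ 0 := by
      rw [hY]
      exact mul_ne_zero (char_ne_zero ψ r₁) (by simpa using hw₁.ne')
    have hkey : ‖X + Y‖ < w r₀ + w r₁ := by
      have hray : ¬ SameRay ℝ X Y := by
        intro hray
        obtain ⟨u, v, hu, hv, huv⟩ := hray.exists_pos hX0 hY0
        have hnormuv : u * w r₀ = v * w r₁ := by
          have hcong := congrArg norm huv
          rw [norm_smul, norm_smul, hnorm₀, hnorm₁, Real.norm_of_nonneg hu.le,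
            Real.norm_of_nonneg hv.le] at hcong
          simpa using hcong
        have hc : ((u * w r₀ : ℝ) : ℂ) ≠ 0 := by
          simpa using (mul_pos hu hw₀).ne'
        refine hne (mul_right_cancel₀ hc ?_)
        calc ψ r₀ * ((u * w r₀ : ℝ) : ℂ) = (u : ℂ) * X := by rw [hX]; push_cast; ring
          _ = u • X := Complex.real_smul.symm
          _ = v • Y := huv
          _ = (v : ℂ) * Y := Complex.real_smul
          _ = ψ r₁ * ((v * w r₁ : ℝ) : ℂ) := by rw [hY]; push_cast; ring
          _ = ψ r₁ * ((u * w r₀ : ℝ) : ℂ) := by rw [hnormuv]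
      calc ‖X + Y‖ < ‖X‖ + ‖Y‖ := norm_add_lt_of_not_sameRay hray
        _ = w r₀ + w r₁ := by rw [hnorm₀, hnorm₁]
    calc ‖Phi β ψ‖ = ‖(X + Y) + ∑ r ∈ (P.erase r₀).erase r₁, ψ r * (w r : ℂ)‖ := by
          rw [hPhiP, hsplit]
      _ ≤ ‖X + Y‖ + ‖∑ r ∈ (P.erase r₀).erase r₁, ψ r * (w r : ℂ)‖ := norm_add_le _ _
      _ ≤ ‖X + Y‖ + ∑ r ∈ (P.erase r₀).erase r₁, w r := by
          refine add_le_add_right ?_ _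
          refine (norm_sum_le _ _).trans (le_of_eq ?_)
          refine Finset.sum_congr rfl fun r _ => ?_
          rw [norm_mul, norm_char, one_mul, Complex.norm_real, Real.norm_of_nonneg (hw0 r)]
      _ < (w r₀ + w r₁) + ∑ r ∈ (P.erase r₀).erase r₁, w r := by
          exact add_lt_add_left hkey _
      _ = 1 := hwsplit

end BHMG

namespace BHMG
open scoped Classical
variable {A : Type*} [AddCommGroup A] [Fintype A] [MeasurableSpace A] {M : Type*}

/-- swap two elements of `A` -/
noncomputable def swapFn (x y : A) : A → A := fun v =>
  if v = x then y else if v = y then x else v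

lemma swapFn_preimage {x y : A} (h : y ∈ matom x) {B : Set A} (hB : MeasurableSet B) :
    swapFn x y ⁻¹' B = B := by
  have hxy : x ∈ B → y ∈ B := fun hx => mem_matom_iff.1 h B hB hx
  have hyx : y ∈ B → x ∈ B := fun hy => mem_matom_iff.1 (matom_symm h) B hB hy
  ext v
  simp only [Set.mem_preimage, swapFn]
  by_cases hvx : v = x
  · subst hvx
    simp only [if_pos rfl]
    exact ⟨hyx, hxy⟩
  · by_cases hvy : v = y
    · subst hvy
      simp only [if_neg hvx, if_pos rfl]
      exact ⟨hxy, hyx⟩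
    · simp only [if_neg hvx, if_neg hvy]

/-- swap two elements of `A` in the `m₀` coordinate -/
noncomputable def swapAt (x y : A) (m₀ : M) : (M → A) → (M → A) :=
  fun a => Function.update a m₀ (swapFn x y (a m₀))

lemma swapAt_preimage {x y : A} (h : y ∈ matom x) (m₀ : M) {s : Set (M → A)}
    (hs : MeasurableSet s) : swapAt x y m₀ ⁻¹' s = s := by
  classical
  let inv : MeasurableSpace (M → A) :=
    { MeasurableSet' := fun t => swapAt x y m₀ ⁻¹' t = t
      measurableSet_empty := by simp
      measurableSet_compl := fun t ht => by
        simp only [Set.preimage_compl, ht]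
      measurableSet_iUnion := fun f hf => by
        simp only [Set.preimage_iUnion]
        exact Set.iUnion_congr hf }
  have hle : (MeasurableSpace.pi : MeasurableSpace (M → A)) ≤ inv := by
    refine iSup_le fun m => ?_
    rw [MeasurableSpace.le_def]
    intro t ht
    obtain ⟨B, hB, rfl⟩ := MeasurableSpace.measurableSet_comap.1 ht
    show swapAt x y m₀ ⁻¹' ((fun a : M → A => a m) ⁻¹' B) = _
    by_cases hm : m = m₀
    · subst hm
      have key : swapAt x y m ⁻¹' ((fun a : M → A => a m) ⁻¹' B) =
          (fun a : M → A => a m) ⁻¹' (swapFn x y ⁻¹' B) := by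
        ext a
        simp only [Set.mem_preimage, swapAt, Function.update_self]
      rw [key, swapFn_preimage h hB]
    · ext a
      simp only [Set.mem_preimage, swapAt, Function.update_of_ne hm]
  exact hle s hs

end BHMG

namespace BHMG
open MeasureTheory
open scoped Classical
variable {A : Type*} [AddCommGroup A] [Fintype A] [MeasurableSpace A] {M : Type*}

lemma charEval_eq_prod (χ : M → AddChar A ℂ) (hfin : {m | χ m ≠ 1}.Finite) (a : M → A) :
    charEval χ a = ∏ m ∈ hfin.toFinset, χ m (a m) := by
  rw [charEval]
  refine finprod_eq_finset_prod_of_mulSupport_subset _ ?_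
  intro m hm
  rw [Function.mem_mulSupport] at hm
  rw [Set.Finite.coe_toFinset]
  intro h1
  exact hm (by rw [h1]; exact AddChar.one_apply _)

end BHMG

namespace BHMG
open MeasureTheory
open scoped Classical
variable {A : Type*} [AddCommGroup A] [Fintype A] [MeasurableSpace A] {M : Type*}

lemma integral_charEval_eq_zero
    (β : Measure A) (μ : Measure (M → A)) [IsProbabilityMeasure μ]
    (hμ : ∀ (s : Finset M) (f : M → A),
      μ {a | ∀ m ∈ s, a m = f m} = ∏ m ∈ s, β {f m})
    (χ : M → AddChar A ℂ) (hfin : {m | χ m ≠ 1}.Finite)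
    {m₀ : M} (hm₀ : m₀ ∈ hfin.toFinset) {z yv : A} (hz0 : β (matom z) ≠ 0)
    (hyv : yv ∈ matom z) (hneq : χ m₀ yv ≠ χ m₀ z) :
    ∫ a, charEval χ a ∂μ = 0 := by
  set S := hfin.toFinset with hS
  refine integral_undef fun hInt => ?_
  obtain ⟨g, hg_sm, hfg⟩ := hInt.1
  obtain ⟨E, hsubE, hEmeas, hE0⟩ := exists_measurable_superset_of_null (ae_iff.1 hfg)
  -- find a point outside E whose m₀ coordinate is in the atom of z
  have hxin : μ {a : M → A | a m₀ ∈ matom z} ≠ 0 := by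
    intro h0
    apply hz0
    have hsub : {a : M → A | ∀ m ∈ ({m₀} : Finset M), a m = (fun _ => z) m} ⊆
        {a : M → A | a m₀ ∈ matom z} := by
      intro a ha
      have := ha m₀ (Finset.mem_singleton_self m₀)
      simp only [Set.mem_setOf_eq, this]
      exact mem_matom_self z
    have := hμ ({m₀} : Finset M) (fun _ => z)
    rw [Finset.prod_singleton] at this
    rw [← measure_singleton_eq_matom β z, ← this]
    exact measure_mono_null hsub h0
  obtain ⟨a, haM, haE⟩ : ({a : M → A | a m₀ ∈ matom z} \ E).Nonempty := by
    apply nonempty_of_measure_ne_zero (μ := μ)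
    rw [measure_diff_null hE0]
    exact hxin
  rw [Set.mem_setOf_eq] at haM
  set a' := Function.update a m₀ z with ha'
  set a'' := Function.update a m₀ yv with ha''
  have hU : swapAt (a m₀) z m₀ a = a' := by
    rw [swapAt, swapFn, if_pos rfl, ha']
  have hT : swapAt z yv m₀ a' = a'' := by
    rw [swapAt, ha', Function.update_self, swapFn, if_pos rfl, Function.update_idem, ha'']
  have ha'E : a' ∉ E := by
    intro hmem
    apply haE
    have := swapAt_preimage (matom_symm haM) m₀ hEmeas
    rw [← this]
    show swapAt (a m₀) z m₀ a ∈ E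
    rw [hU]
    exact hmem
  have ha''E : a'' ∉ E := by
    intro hmem
    apply ha'E
    have := swapAt_preimage hyv m₀ hEmeas
    rw [← this]
    show swapAt z yv m₀ a' ∈ E
    rw [hT]
    exact hmem
  have hgT : g a'' = g a' := by
    have hmeas : MeasurableSet (g ⁻¹' {g a'}) :=
      hg_sm.measurable (measurableSet_singleton (g a'))
    have hinv := swapAt_preimage hyv m₀ hmeas
    have hmem : a' ∈ g ⁻¹' {g a'} := rfl
    rw [← hinv] at hmem
    have : swapAt z yv m₀ a' ∈ g ⁻¹' {g a'} := hmem
    rw [hT] at this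
    exact this
  have hfa' : charEval χ a' = g a' := by
    by_contra h
    exact ha'E (hsubE h)
  have hfa'' : charEval χ a'' = g a'' := by
    by_contra h
    exact ha''E (hsubE h)
  set Q : ℂ := ∏ m ∈ S.erase m₀, χ m (a m) with hQ
  have hca' : charEval χ a' = χ m₀ z * Q := by
    rw [charEval_eq_prod χ hfin a', ← Finset.mul_prod_erase S _ hm₀]
    congr 1
    · rw [ha', Function.update_self]
    · refine Finset.prod_congr rfl fun m hm => ?_
      rw [ha', Function.update_of_ne (Finset.ne_of_mem_erase hm)]
  have hca'' : charEval χ a'' = χ m₀ yv * Q := by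
    rw [charEval_eq_prod χ hfin a'', ← Finset.mul_prod_erase S _ hm₀]
    congr 1
    · rw [ha'', Function.update_self]
    · refine Finset.prod_congr rfl fun m hm => ?_
      rw [ha'', Function.update_of_ne (Finset.ne_of_mem_erase hm)]
  have hQ0 : Q ≠ 0 := Finset.prod_ne_zero_iff.2 fun m _ => char_ne_zero _ _
  apply hneq
  apply mul_right_cancel₀ hQ0
  rw [← hca', ← hca'', hfa', hfa'', hgT]

end BHMG

namespace BHMG
open MeasureTheory
open scoped Classical
variable {A : Type*} [AddCommGroup A] [Fintype A] [MeasurableSpace A] {M : Type*}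

lemma integral_charEval_eq_prod
    (β : Measure A) [IsProbabilityMeasure β] (μ : Measure (M → A)) [IsProbabilityMeasure μ]
    (hμ : ∀ (s : Finset M) (f : M → A),
      μ {a | ∀ m ∈ s, a m = f m} = ∏ m ∈ s, β {f m})
    (χ : M → AddChar A ℂ) (hfin : {m | χ m ≠ 1}.Finite)
    (H : ∀ m ∈ hfin.toFinset, ∀ z : A, β (matom z) ≠ 0 →
      ∀ yy ∈ matom z, χ m yy = χ m z) :
    ∫ a, charEval χ a ∂μ = ∏ m ∈ hfin.toFinset, Phi β (χ m) := by
  set S := hfin.toFinset with hS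
  set pf : Finset ((↥S : Type _) → A) := Fintype.piFinset (fun _ => Reps A) with hpf
  set D : ((↥S : Type _) → A) → Set (M → A) :=
    fun g => {a | ∀ m : ↥S, a (m : M) ∈ matom (g m)} with hD
  have measD : ∀ g, MeasurableSet (D g) := by
    intro g
    have : D g = ⋂ m : ↥S, (fun a : M → A => a (m : M)) ⁻¹' matom (g m) := by
      ext a
      simp [hD, Set.mem_iInter]
    rw [this]
    exact MeasurableSet.iInter fun m => measurable_pi_apply (m : M) (measurableSet_matom (g m))
  have hdisj : (↑pf : Set ((↥S : Type _) → A)).PairwiseDisjoint D := by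
    intro g hg g' hg' hne
    rw [Finset.mem_coe, hpf, Fintype.mem_piFinset] at hg hg'
    have hex : ∃ m : ↥S, g m ≠ g' m := by
      by_contra hcon
      push_neg at hcon
      exact hne (funext hcon)
    obtain ⟨m, hm⟩ := hex
    rw [Function.onFun, Set.disjoint_left]
    rintro a ha ha'
    refine hm ?_
    have h1 : rep (a (m : M)) = rep (g m) := rep_eq_of_mem (ha m)
    have h2 : rep (a (m : M)) = rep (g' m) := rep_eq_of_mem (ha' m)
    rw [← rep_of_mem_Reps (hg m), ← rep_of_mem_Reps (hg' m), ← h1, ← h2]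
  have hcover : ⋃ g ∈ pf, D g = Set.univ := by
    ext a
    simp only [Set.mem_iUnion, Set.mem_univ, iff_true]
    refine ⟨fun m => rep (a (m : M)), ?_, fun m => mem_matom_rep _⟩
    rw [hpf, Fintype.mem_piFinset]
    exact fun m => rep_mem_Reps _
  have hsum1 : ∑ g ∈ pf, μ (D g) = 1 := by
    rw [← measure_biUnion_finset hdisj (fun g _ => measD g), hcover, measure_univ]
  have hlow : ∀ g ∈ pf, ∏ m : ↥S, β (matom (g m)) ≤ μ (D g) := by
    intro g hg
    set f : M → A := fun m => if h : m ∈ S then g ⟨m, h⟩ else 0 with hf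
    have hfg : ∀ m : ↥S, f (m : M) = g m := by
      intro m
      rw [hf]
      simp only [m.2, dif_pos]
    have hC : {a : M → A | ∀ m ∈ S, a m = f m} ⊆ D g := by
      intro a ha m
      rw [ha (m : M) m.2, hfg m]
      exact mem_matom_self _
    calc ∏ m : ↥S, β (matom (g m)) = ∏ m : ↥S, β {f (m : M)} := by
          refine Finset.prod_congr rfl fun m _ => ?_
          rw [hfg m, measure_singleton_eq_matom]
      _ = ∏ m ∈ S, β {f m} := Finset.prod_coe_sort S (fun m => β {f m})
      _ = μ {a : M → A | ∀ m ∈ S, a m = f m} := (hμ S f).symm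
      _ ≤ μ (D g) := measure_mono hC
  have hsum2 : ∑ g ∈ pf, ∏ m : ↥S, β (matom (g m)) = 1 := by
    rw [hpf, ← Finset.prod_univ_sum (fun _ : ↥S => Reps A)
      (fun (_ : ↥S) (r : A) => β (matom r))]
    simp [sum_measure_matom β]
  -- real versions
  set p : ((↥S : Type _) → A) → ℝ := fun g => ∏ m : ↥S, (β (matom (g m))).toReal with hp
  set q : ((↥S : Type _) → A) → ℝ := fun g => (μ (D g)).toReal with hq
  have hpER : ∀ g, p g = (∏ m : ↥S, β (matom (g m))).toReal := by
    intro g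
    rw [hp, ENNReal.toReal_prod]
  have hple : ∀ g ∈ pf, p g ≤ q g := by
    intro g hg
    rw [hpER, hq]
    exact ENNReal.toReal_mono (measure_ne_top μ _) (hlow g hg)
  have hsump : ∑ g ∈ pf, p g = 1 := by
    have hne : ∀ g ∈ pf, (∏ m : ↥S, β (matom (g m))) ≠ ⊤ :=
      fun g _ => (ENNReal.prod_lt_top fun m _ => measure_lt_top β _).ne
    calc ∑ g ∈ pf, p g = ∑ g ∈ pf, (∏ m : ↥S, β (matom (g m))).toReal :=
          Finset.sum_congr rfl fun g _ => hpER g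
      _ = (∑ g ∈ pf, ∏ m : ↥S, β (matom (g m))).toReal := (ENNReal.toReal_sum hne).symm
      _ = 1 := by rw [hsum2]; exact ENNReal.toReal_one
  have hsumq : ∑ g ∈ pf, q g = 1 := by
    calc ∑ g ∈ pf, q g = (∑ g ∈ pf, μ (D g)).toReal :=
          (ENNReal.toReal_sum fun g _ => measure_ne_top μ _).symm
      _ = 1 := by rw [hsum1]; exact ENNReal.toReal_one
  have hpq : ∀ g ∈ pf, p g = q g :=
    (Finset.sum_eq_sum_iff_of_le hple).1 (hsump.trans hsumq.symm)
  -- the simple function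
  set F' : (M → A) → ℂ :=
    fun a => ∑ g ∈ pf, Set.indicator (D g) (fun _ => ∏ m : ↥S, χ m (g m)) a with hF'
  have hae : (fun a => charEval χ a) =ᵐ[μ] F' := by
    set Z : Set (M → A) := ⋃ g ∈ pf.filter (fun g => μ (D g) = 0), D g with hZ
    have hZ0 : μ Z = 0 := by
      refine le_antisymm ?_ zero_le
      refine (measure_biUnion_finset_le _ _).trans ?_
      refine le_of_eq ?_
      rw [Finset.sum_congr rfl fun g hg => (Finset.mem_filter.1 hg).2, Finset.sum_const,
        smul_zero]
    rw [Filter.EventuallyEq, ae_iff]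
    refine measure_mono_null ?_ hZ0
    intro a ha
    rw [Set.mem_setOf_eq] at ha
    by_contra haZ
    apply ha
    set ga : (↥S : Type _) → A := fun m => rep (a (m : M)) with hga
    have hga_pf : ga ∈ pf := by
      rw [hpf, Fintype.mem_piFinset]
      exact fun m => rep_mem_Reps _
    have haD : a ∈ D ga := fun m => mem_matom_rep _
    have hνne : μ (D ga) ≠ 0 := by
      intro h0
      exact haZ (Set.mem_biUnion (Finset.mem_filter.2 ⟨hga_pf, h0⟩) haD)
    have hqne : q ga ≠ 0 := by
      rw [hq]
      simp [ENNReal.toReal_eq_zero_iff, hνne, measure_ne_top μ _]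
    have hpne : p ga ≠ 0 := by
      rw [hpq ga hga_pf]
      exact hqne
    have hfac : ∀ m : ↥S, β (matom (ga m)) ≠ 0 := by
      intro m
      rw [hp] at hpne
      intro h0
      exact hpne (Finset.prod_eq_zero (Finset.mem_univ m) (by rw [h0, ENNReal.toReal_zero]))
    have hF'a : F' a = ∏ m : ↥S, χ m (ga m) := by
      simp only [hF']
      rw [Finset.sum_eq_single ga]
      · rw [Set.indicator_of_mem haD]
      · intro g' hg' hne
        refine Set.indicator_of_notMem ?_ _
        intro haD'
        exact Set.disjoint_left.1 (hdisj hg' hga_pf hne) haD' haD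
      · intro hnot
        exact absurd hga_pf hnot
    rw [hF'a, charEval_eq_prod χ hfin a, ← hS,
      ← Finset.prod_coe_sort S (fun m => χ m (a m))]
    refine Finset.prod_congr rfl fun m _ => ?_
    exact H (m : M) m.2 (ga m) (hfac m) (a (m : M)) (mem_matom_rep _)
  rw [integral_congr_ae hae, hF',
    integral_finset_sum _ (fun g _ => (integrable_const _).indicator (measD g))]
  have hterm : ∀ g ∈ pf, ∫ a, Set.indicator (D g) (fun _ => ∏ m : ↥S, χ m (g m)) a ∂μ =
      p g • (∏ m : ↥S, χ m (g m)) := by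
    intro g hg
    have hqp : (μ (D g)).toReal = p g := (hpq g hg).symm
    rw [integral_indicator_const _ (measD g), measureReal_def, hqp]
  rw [Finset.sum_congr rfl hterm]
  have hfactor : ∀ g ∈ pf, p g • (∏ m : ↥S, χ m (g m)) =
      ∏ m : ↥S, (χ m (g m) * (((β (matom (g m))).toReal : ℝ) : ℂ)) := by
    intro g hg
    calc p g • (∏ m : ↥S, χ m (g m)) = (p g : ℂ) * ∏ m : ↥S, χ m (g m) := Complex.real_smul
      _ = (∏ m : ↥S, (((β (matom (g m))).toReal : ℝ) : ℂ)) * ∏ m : ↥S, χ m (g m) := by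
          rw [hp]
          push_cast
          ring
      _ = ∏ m : ↥S, (χ m (g m) * (((β (matom (g m))).toReal : ℝ) : ℂ)) := by
          rw [Finset.prod_mul_distrib]
          ring
  rw [Finset.sum_congr rfl hfactor, hpf, ← Finset.prod_univ_sum (fun _ : ↥S => Reps A)
    (fun (m : ↥S) (r : A) => χ (m : M) r * (((β (matom r)).toReal : ℝ) : ℂ))]
  rw [← Finset.prod_coe_sort S (fun m => Phi β (χ m))]
  rfl

end BHMG

/-- If the support of `β` is not contained in a single coset of any proper
subgroup of the finite abelian group `A`, then the Bernoulli measure `β^{⊗M}`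
on `A^M` is harmonically mixing. -/
theorem bernoulli_harmonically_mixing_general (A : Type*) [AddCommGroup A] [Fintype A]
    [MeasurableSpace A] (M : Type*) [Countable M]
    (β : Measure A) [IsProbabilityMeasure β]
    (hβ : ∀ G : AddSubgroup A, G ≠ ⊤ → ∀ x : A, β {a | a - x ∈ G} < 1)
    (μ : Measure (M → A)) [IsProbabilityMeasure μ]
    (hμ : ∀ (s : Finset M) (f : M → A),
      μ {a | ∀ m ∈ s, a m = f m} = ∏ m ∈ s, β {f m}) :
    ∀ ε > 0, ∃ R : ℕ, ∀ χ : M → AddChar A ℂ, {m | χ m ≠ 1}.Finite →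
      R < {m | χ m ≠ 1}.ncard → ‖∫ a, charEval χ a ∂μ‖ < ε := by
  classical
  intro ε hε
  by_cases hNT : ∃ ψ : AddChar A ℂ, ψ ≠ 1
  · have hfinNT : ({ψ : AddChar A ℂ | ψ ≠ 1}).Finite := Set.toFinite _
    set T := hfinNT.toFinset with hT
    have hTne : T.Nonempty := by
      obtain ⟨ψ, hψ⟩ := hNT
      exact ⟨ψ, by rw [hT, Set.Finite.mem_toFinset]; exact hψ⟩
    set c := T.sup' hTne (fun ψ => ‖BHMG.Phi β ψ‖) with hc
    have hc0 : 0 ≤ c := by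
      obtain ⟨ψ₀, hψ₀⟩ := hTne
      exact (norm_nonneg (BHMG.Phi β ψ₀)).trans
        (Finset.le_sup' (fun ψ => ‖BHMG.Phi β ψ‖) hψ₀)
    have hc1 : c < 1 := by
      rw [hc, Finset.sup'_lt_iff hTne]
      intro ψ hψ
      refine BHMG.norm_Phi_lt_one β hβ ψ ?_
      rw [hT, Set.Finite.mem_toFinset] at hψ
      exact hψ
    obtain ⟨R, hR⟩ := exists_pow_lt_of_lt_one hε hc1
    refine ⟨R, fun χ hfin hcard => ?_⟩
    have hnc : {m | χ m ≠ 1}.ncard = hfin.toFinset.card := by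
      rw [← Set.ncard_coe_finset, Set.Finite.coe_toFinset]
    rw [hnc] at hcard
    by_cases H : ∀ m ∈ hfin.toFinset, ∀ z : A, β (BHMG.matom z) ≠ 0 →
        ∀ yy ∈ BHMG.matom z, χ m yy = χ m z
    · rw [BHMG.integral_charEval_eq_prod β μ hμ χ hfin H]
      have hcard' : R ≤ hfin.toFinset.card := hcard.le
      calc ‖∏ m ∈ hfin.toFinset, BHMG.Phi β (χ m)‖
          = ∏ m ∈ hfin.toFinset, ‖BHMG.Phi β (χ m)‖ := norm_prod _ _
        _ ≤ ∏ m ∈ hfin.toFinset, c := by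
            refine Finset.prod_le_prod (fun m _ => norm_nonneg _) fun m hm => ?_
            refine Finset.le_sup' (fun ψ => ‖BHMG.Phi β ψ‖) ?_
            rw [hT, Set.Finite.mem_toFinset]
            rw [Set.Finite.mem_toFinset] at hm
            exact hm
        _ = c ^ hfin.toFinset.card := Finset.prod_const c
        _ ≤ c ^ R := pow_le_pow_of_le_one hc0 hc1.le hcard'
        _ < ε := hR
    · push_neg at H
      obtain ⟨m₀, hm₀, z, hz0, yy, hyy, hne⟩ := H
      rw [BHMG.integral_charEval_eq_zero β μ hμ χ hfin hm₀ hz0 hyy hne, norm_zero]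
      exact hε
  · refine ⟨0, fun χ hfin hcard => ?_⟩
    push_neg at hNT
    have hempty : {m | χ m ≠ 1} = ∅ := by
      ext m
      simp [hNT (χ m)]
    rw [hempty, Set.ncard_empty] at hcard
    omega
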